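/- Let V : [0,T] × ℝⁿ → ℝⁿ be C¹ with divergence div_x V, let X(s,t,x) be its C¹ flow with ∂_s X(s,t,x) = V(s, X(s,t,x)), X(t,t,x) = x, and define J(s,t,x) := det(D_x X(s,t,x)). Then J satisfies the Liouville formula ∂_s J(s,t,x) = div_x V(s, X(s,t,x)) · J(s,t,x), and hence J(s,t,x) = exp(∫_t^s div_x V(τ, X(τ,t,x)) dτ); in particular J(s,t,x) > 0 and J(t,t,x) = 1. -/

import Mathlib

open Set MeasureTheory intervalIntegral Matrix

/-- The spatial divergence of the vector field `V` at time `s` and point `y`. -/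
noncomputable def divX (n : ℕ) (V : ℝ → (Fin n → ℝ) → (Fin n → ℝ))
    (s : ℝ) (y : Fin n → ℝ) : ℝ :=
  ∑ i, fderiv ℝ (fun z => V s z) y (Pi.single i 1) i

/-- The Jacobian determinant `J(s,t,x) = det(D_x X(s,t,x))` of the flow. -/
noncomputable def Jdet (n : ℕ) (X : ℝ → ℝ → (Fin n → ℝ) → (Fin n → ℝ))
    (s t : ℝ) (x : Fin n → ℝ) : ℝ :=
  LinearMap.det
    ((fderiv ℝ (fun y => X s t y) x : (Fin n → ℝ) →ₗ[ℝ] (Fin n → ℝ)))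

/-- Derivative of the determinant of a matrix-valued curve, entrywise hypotheses. -/
theorem liouville_aux_hasDerivAt_det {n : ℕ} {M : ℝ → Matrix (Fin n) (Fin n) ℝ}
    {M' : Matrix (Fin n) (Fin n) ℝ} {s : ℝ}
    (h : ∀ i j, HasDerivAt (fun σ => M σ i j) (M' i j) s) :
    HasDerivAt (fun σ => (M σ).det)
      (∑ j, (Matrix.updateCol (M s) j (fun k => M' k j)).det) s := by
  have H : HasDerivAt (fun σ => ∑ p : Equiv.Perm (Fin n),
      (Equiv.Perm.sign p : ℝ) * ∏ i, M σ (p i) i)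
      (∑ p : Equiv.Perm (Fin n), (Equiv.Perm.sign p : ℝ) *
        (∑ j, (∏ i ∈ Finset.univ.erase j, M s (p i) i) • M' (p j) j)) s := by
    refine HasDerivAt.fun_sum (fun p _ => ?_)
    exact (HasDerivAt.fun_finset_prod (fun i _ => h (p i) i)).const_mul _
  have e1 : (fun σ => (M σ).det) = fun σ => ∑ p : Equiv.Perm (Fin n),
      (Equiv.Perm.sign p : ℝ) * ∏ i, M σ (p i) i := by
    funext σ; rw [Matrix.det_apply']
  rw [e1]
  convert H using 1
  simp only [smul_eq_mul, Finset.mul_sum]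
  rw [Finset.sum_comm]
  refine Finset.sum_congr rfl fun j _ => ?_
  rw [Matrix.det_apply']
  refine Finset.sum_congr rfl fun p _ => ?_
  have e2 : ∏ i, (M s).updateCol j (fun k => M' k j) (p i) i
      = M' (p j) j * ∏ i ∈ Finset.univ.erase j, M s (p i) i := by
    rw [← Finset.mul_prod_erase Finset.univ
      (fun i => (M s).updateCol j (fun k => M' k j) (p i) i) (Finset.mem_univ j)]
    congr 1
    · simp [Matrix.updateCol_apply]
    · refine Finset.prod_congr rfl fun i hi => ?_
      simp [Matrix.updateCol_apply, Finset.ne_of_mem_erase hi]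
  rw [e2]; ring

/-- Liouville: derivative of `det` along a curve whose derivative is `B * M s`. -/
theorem liouville_aux_hasDerivAt_det_trace {n : ℕ} {M : ℝ → Matrix (Fin n) (Fin n) ℝ}
    {B : Matrix (Fin n) (Fin n) ℝ} {s : ℝ}
    (h : ∀ i j, HasDerivAt (fun σ => M σ i j) ((B * M s) i j) s) :
    HasDerivAt (fun σ => (M σ).det) (B.trace * (M s).det) s := by
  have hN : ∀ i j, HasDerivAt (fun σ => (M σ)ᵀ i j) ((B * M s)ᵀ i j) s := by
    intro i j; exact h j i
  have H := liouville_aux_hasDerivAt_det (M := fun σ => (M σ)ᵀ) (M' := (B * M s)ᵀ) hN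
  have e1 : (fun σ => (M σ)ᵀ.det) = fun σ => (M σ).det := by
    funext σ; rw [Matrix.det_transpose]
  rw [e1] at H
  convert H using 1
  have e2 : ∀ j, ((M s)ᵀ.updateCol j fun k => (B * M s)ᵀ k j).det
      = B j j * (M s).det := by
    intro j
    have e3 : (fun k => (B * M s)ᵀ k j) = ∑ l, B j l • M s l := by
      funext k; simp [Matrix.mul_apply, Finset.sum_apply]
    rw [e3, Matrix.updateCol_transpose, Matrix.det_transpose,
      Matrix.det_updateRow_sum]
    simp
  simp only [e2, ← Finset.sum_mul, Matrix.trace]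
  rfl

/-- Liouville formula for the Jacobian of the characteristic flow:
`∂ₛJ = div_x V(s, X(s,t,x))·J`, hence
`J(s,t,x) = exp(∫ₜˢ div_x V(τ, X(τ,t,x)) dτ)`; in particular `J > 0` and
`J(t,t,x) = 1`. -/
theorem liouville_formula (n : ℕ)
    (V : ℝ → (Fin n → ℝ) → (Fin n → ℝ))
    (hV : ContDiff ℝ 1 (fun p : ℝ × (Fin n → ℝ) => V p.1 p.2))
    (X : ℝ → ℝ → (Fin n → ℝ) → (Fin n → ℝ))
    (hX : ContDiff ℝ 1 (fun p : ℝ × ℝ × (Fin n → ℝ) => X p.1 p.2.1 p.2.2))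
    (hflow : ∀ s t x, HasDerivAt (fun σ => X σ t x) (V s (X s t x)) s)
    (hinit : ∀ t x, X t t x = x) :
    (∀ s t x, HasDerivAt (fun σ => Jdet n X σ t x)
        (divX n V s (X s t x) * Jdet n X s t x) s) ∧
    (∀ s t x, Jdet n X s t x = Real.exp (∫ τ in t..s, divX n V τ (X τ t x))) ∧
    (∀ s t x, 0 < Jdet n X s t x) ∧
    (∀ t x, Jdet n X t t x = 1) := by
  -- notation
  set Φ : ℝ × ℝ × (Fin n → ℝ) → (Fin n → ℝ) := fun p => X p.1 p.2.1 p.2.2 with hΦ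
  set Ψ : ℝ × (Fin n → ℝ) → (Fin n → ℝ) := fun p => V p.1 p.2 with hΨ
  set L : (Fin n → ℝ) →L[ℝ] ℝ × ℝ × (Fin n → ℝ) :=
    (0 : (Fin n → ℝ) →L[ℝ] ℝ).prod (((0 : (Fin n → ℝ) →L[ℝ] ℝ)).prod
      (ContinuousLinearMap.id ℝ (Fin n → ℝ))) with hL
  set L2 : (Fin n → ℝ) →L[ℝ] ℝ × (Fin n → ℝ) :=
    (0 : (Fin n → ℝ) →L[ℝ] ℝ).prod (ContinuousLinearMap.id ℝ (Fin n → ℝ)) with hL2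
  set A : ℝ → ℝ → (Fin n → ℝ) → ((Fin n → ℝ) →L[ℝ] (Fin n → ℝ)) :=
    fun s t x => fderiv ℝ (fun y => X s t y) x with hAdef
  set B : ℝ → (Fin n → ℝ) → ((Fin n → ℝ) →L[ℝ] (Fin n → ℝ)) :=
    fun s y => fderiv ℝ (fun z => V s z) y with hBdef
  -- partial derivatives in x exist and are continuous
  have hAeq : ∀ s t x, A s t x = (fderiv ℝ Φ (s, t, x)).comp L := by
    intro s t x
    have h1 : HasFDerivAt (fun y : Fin n → ℝ => ((s, t, y) : ℝ × ℝ × (Fin n → ℝ))) L x :=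
      (hasFDerivAt_const s x).prodMk ((hasFDerivAt_const t x).prodMk (hasFDerivAt_id x))
    exact ((((hX.differentiable one_ne_zero) (s, t, x)).hasFDerivAt).comp x h1).fderiv
  have hA : ∀ s t x, HasFDerivAt (fun y => X s t y) (A s t x) x := by
    intro s t x
    have h1 : HasFDerivAt (fun y : Fin n → ℝ => ((s, t, y) : ℝ × ℝ × (Fin n → ℝ))) L x :=
      (hasFDerivAt_const s x).prodMk ((hasFDerivAt_const t x).prodMk (hasFDerivAt_id x))
    rw [hAeq s t x]
    exact (((hX.differentiable one_ne_zero) (s, t, x)).hasFDerivAt).comp x h1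
  have hAcont : Continuous (fun q : ℝ × ℝ × (Fin n → ℝ) => A q.1 q.2.1 q.2.2) := by
    have e : (fun q : ℝ × ℝ × (Fin n → ℝ) => A q.1 q.2.1 q.2.2)
        = fun q => (fderiv ℝ Φ q).comp L := by
      funext q; exact hAeq q.1 q.2.1 q.2.2
    rw [e]
    exact (hX.continuous_fderiv one_ne_zero).clm_comp continuous_const
  have hBeq : ∀ s y, B s y = (fderiv ℝ Ψ (s, y)).comp L2 := by
    intro s y
    have h1 : HasFDerivAt (fun z : Fin n → ℝ => ((s, z) : ℝ × (Fin n → ℝ))) L2 y :=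
      (hasFDerivAt_const s y).prodMk (hasFDerivAt_id y)
    exact ((((hV.differentiable one_ne_zero) (s, y)).hasFDerivAt).comp y h1).fderiv
  have hB : ∀ s y, HasFDerivAt (fun z => V s z) (B s y) y := by
    intro s y
    have h1 : HasFDerivAt (fun z : Fin n → ℝ => ((s, z) : ℝ × (Fin n → ℝ))) L2 y :=
      (hasFDerivAt_const s y).prodMk (hasFDerivAt_id y)
    rw [hBeq s y]
    exact (((hV.differentiable one_ne_zero) (s, y)).hasFDerivAt).comp y h1
  have hBcont : Continuous (fun q : ℝ × (Fin n → ℝ) => B q.1 q.2) := by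
    have e : (fun q : ℝ × (Fin n → ℝ) => B q.1 q.2) = fun q => (fderiv ℝ Ψ q).comp L2 := by
      funext q; exact hBeq q.1 q.2
    rw [e]
    exact (hV.continuous_fderiv one_ne_zero).clm_comp continuous_const
  -- integral equation for the flow
  have hFTC : ∀ s t x, X s t x = x + ∫ τ in t..s, V τ (X τ t x) := by
    intro s t x
    have hc : Continuous fun τ => X τ t x := by
      have he : Continuous fun τ : ℝ => ((τ, t, x) : ℝ × ℝ × (Fin n → ℝ)) := by fun_prop
      exact hX.continuous.comp he
    have hc2 : Continuous fun τ => V τ (X τ t x) := by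
      have he : Continuous fun τ : ℝ => ((τ, X τ t x) : ℝ × (Fin n → ℝ)) := by fun_prop
      exact hV.continuous.comp he
    have h1 := intervalIntegral.integral_eq_sub_of_hasDerivAt
      (f := fun σ => X σ t x) (f' := fun τ => V τ (X τ t x))
      (fun τ _ => hflow τ t x) (hc2.intervalIntegrable t s)
    rw [h1]
    simp only [hinit]
    abel
  -- J(t,t,x) = 1
  have hJtt : ∀ t x, Jdet n X t t x = 1 := by
    intro t x
    have e : (fun y => X t t y) = fun y : Fin n → ℝ => y := funext (hinit t)
    simp only [Jdet]
    rw [e, fderiv_id']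
    simp
  -- divergence is the trace of `toMatrix'` of B
  have hdiv : ∀ s y, divX n V s y
      = Matrix.trace (LinearMap.toMatrix' (B s y : (Fin n → ℝ) →ₗ[ℝ] (Fin n → ℝ))) := by
    intro s y
    simp only [divX, Matrix.trace]
    refine Finset.sum_congr rfl fun i _ => ?_
    rw [Matrix.diag_apply, LinearMap.toMatrix'_apply]
    have hv : (Pi.single i 1 : Fin n → ℝ) = fun j' => if j' = i then 1 else 0 := by
      funext j'; simp [Pi.single_apply]
    rw [hv]
    rfl
  -- the main derivative, for fixed t, x
  have hDER : ∀ t x s, HasDerivAt (fun σ => Jdet n X σ t x)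
      (divX n V s (X s t x) * Jdet n X s t x) s := by
    intro t x
    -- the variational integral equation
    have key : ∀ s, A s t x = ContinuousLinearMap.id ℝ (Fin n → ℝ)
        + ∫ τ in t..s, (B τ (X τ t x)).comp (A τ t x) := by
      intro s
      have c1 : Continuous fun q : ℝ × (Fin n → ℝ) => X q.1 t q.2 := by
        have he : Continuous fun q : ℝ × (Fin n → ℝ) =>
            ((q.1, t, q.2) : ℝ × ℝ × (Fin n → ℝ)) := by fun_prop
        exact hX.continuous.comp he
      have hcF' : Continuous fun q : ℝ × (Fin n → ℝ) => (B q.1 (X q.1 t q.2)).comp (A q.1 t q.2) := by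
        have c2 : Continuous fun q : ℝ × (Fin n → ℝ) => B q.1 (X q.1 t q.2) := by
          have he : Continuous fun q : ℝ × (Fin n → ℝ) =>
              ((q.1, X q.1 t q.2) : ℝ × (Fin n → ℝ)) := by fun_prop
          exact hBcont.comp he
        have c3 : Continuous fun q : ℝ × (Fin n → ℝ) => A q.1 t q.2 := by
          have he : Continuous fun q : ℝ × (Fin n → ℝ) =>
              ((q.1, t, q.2) : ℝ × ℝ × (Fin n → ℝ)) := by fun_prop
          exact hAcont.comp he
        exact c2.clm_comp c3
      have hembx : Continuous fun τ : ℝ => ((τ, x) : ℝ × (Fin n → ℝ)) := by fun_prop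
      have hVX : ∀ y : Fin n → ℝ, Continuous fun τ => V τ (X τ t y) := by
        intro y
        have hcy : Continuous fun τ => X τ t y := by
          have he : Continuous fun τ : ℝ => ((τ, t, y) : ℝ × ℝ × (Fin n → ℝ)) := by fun_prop
          exact hX.continuous.comp he
        have he2 : Continuous fun τ : ℝ => ((τ, X τ t y) : ℝ × (Fin n → ℝ)) := by fun_prop
        exact hV.continuous.comp he2
      obtain ⟨C, hC⟩ := IsCompact.exists_bound_of_continuousOn
        (isCompact_uIcc.prod (isCompact_closedBall x 1)) hcF'.continuousOn
      have hint := intervalIntegral.hasFDerivAt_integral_of_dominated_of_fderiv_le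
        (𝕜 := ℝ) (μ := volume) (F := fun y τ => V τ (X τ t y))
        (F' := fun y τ => (B τ (X τ t y)).comp (A τ t y)) (x₀ := x) (a := t) (b := s)
        (bound := fun _ => C) (s := Metric.ball x 1) (Metric.ball_mem_nhds x one_pos)
        (Filter.Eventually.of_forall fun y => (hVX y).aestronglyMeasurable)
        ((hVX x).intervalIntegrable t s)
        ((hcF'.comp hembx).aestronglyMeasurable)
        (Filter.Eventually.of_forall fun τ hτ y hy => hC (τ, y)
          ⟨uIoc_subset_uIcc hτ, Metric.ball_subset_closedBall hy⟩)
        (intervalIntegrable_const)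
        (Filter.Eventually.of_forall fun τ _ y _ => (hB τ (X τ t y)).comp y (hA τ t y))
      have h6 : (fun y => X s t y) = fun y => y + ∫ τ in t..s, V τ (X τ t y) :=
        funext fun y => hFTC s t y
      have h7 : HasFDerivAt (fun y => X s t y)
          (ContinuousLinearMap.id ℝ (Fin n → ℝ)
            + ∫ τ in t..s, (B τ (X τ t x)).comp (A τ t x)) x := by
        rw [h6]
        exact (hasFDerivAt_id x).add hint
      exact (hA s t x).unique h7
    -- derivative of A in s
    set W : ℝ → ((Fin n → ℝ) →L[ℝ] (Fin n → ℝ)) :=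
      fun τ => (B τ (X τ t x)).comp (A τ t x) with hW
    have hcW : Continuous W := by
      have c1 : Continuous fun τ => X τ t x := by
        have he : Continuous fun τ : ℝ => ((τ, t, x) : ℝ × ℝ × (Fin n → ℝ)) := by fun_prop
        exact hX.continuous.comp he
      have c2 : Continuous fun τ => B τ (X τ t x) := by
        have he : Continuous fun τ : ℝ => ((τ, X τ t x) : ℝ × (Fin n → ℝ)) := by fun_prop
        exact hBcont.comp he
      have c3 : Continuous fun τ => A τ t x := by
        have he : Continuous fun τ : ℝ => ((τ, t, x) : ℝ × ℝ × (Fin n → ℝ)) := by fun_prop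
        exact hAcont.comp he
      exact c2.clm_comp c3
    have hderivA : ∀ s, HasDerivAt (fun σ => A σ t x) (W s) s := by
      intro s
      have h1 : HasDerivAt (fun σ => ∫ τ in t..σ, W τ) (W s) s :=
        (hcW.integral_hasStrictDerivAt t s).hasDerivAt
      have h2 : (fun σ => A σ t x)
          = fun σ => ContinuousLinearMap.id ℝ (Fin n → ℝ) + ∫ τ in t..σ, W τ :=
        funext fun σ => key σ
      rw [h2]
      exact h1.const_add _
    -- matrix entries
    intro s
    set Mc : ℝ → Matrix (Fin n) (Fin n) ℝ :=
      fun σ => LinearMap.toMatrix' (A σ t x : (Fin n → ℝ) →ₗ[ℝ] (Fin n → ℝ)) with hMc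
    set Bm : Matrix (Fin n) (Fin n) ℝ :=
      LinearMap.toMatrix' (B s (X s t x) : (Fin n → ℝ) →ₗ[ℝ] (Fin n → ℝ)) with hBm
    have hWmat : LinearMap.toMatrix' (W s : (Fin n → ℝ) →ₗ[ℝ] (Fin n → ℝ)) = Bm * Mc s := by
      rw [hW]
      beta_reduce
      rw [ContinuousLinearMap.toLinearMap_comp, LinearMap.toMatrix'_comp]
    have hMentry : ∀ i j, HasDerivAt (fun σ => Mc σ i j) ((Bm * Mc s) i j) s := by
      intro i j
      set ev : ((Fin n → ℝ) →L[ℝ] (Fin n → ℝ)) →L[ℝ] ℝ :=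
        (ContinuousLinearMap.proj i).comp
          (ContinuousLinearMap.apply ℝ (Fin n → ℝ) (fun j' => if j' = j then 1 else 0)) with hev
      have h1 : HasDerivAt (fun σ => ev (A σ t x)) (ev (W s)) s :=
        ev.hasFDerivAt.comp_hasDerivAt s (hderivA s)
      have e1 : (fun σ => Mc σ i j) = fun σ => ev (A σ t x) := by
        funext σ
        show LinearMap.toMatrix' (↑(A σ t x)) i j = ev (A σ t x)
        rw [LinearMap.toMatrix'_apply]
        rw [show (Pi.single j 1 : Fin n → ℝ) = fun j' => if j' = j then 1 else 0 by
          funext j'; simp [Pi.single_apply]]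
        rfl
      have e2 : (Bm * Mc s) i j = ev (W s) := by
        rw [← hWmat, LinearMap.toMatrix'_apply]
        rw [show (Pi.single j 1 : Fin n → ℝ) = fun j' => if j' = j then 1 else 0 by
          funext j'; simp [Pi.single_apply]]
        rfl
      rw [e1, e2]
      exact h1
    have hJ : ∀ σ, Jdet n X σ t x = (Mc σ).det := by
      intro σ
      simp only [Jdet, hMc, LinearMap.det_toMatrix']
      rfl
    have hJfun : (fun σ => Jdet n X σ t x) = fun σ => (Mc σ).det := funext hJ
    have htr : Bm.trace = divX n V s (X s t x) := by
      rw [hdiv s (X s t x)]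
    rw [hJfun, hJ s, ← htr]
    exact liouville_aux_hasDerivAt_det_trace hMentry
  -- continuity of the divergence along the flow
  have hdcont : ∀ t x, Continuous fun τ => divX n V τ (X τ t x) := by
    intro t x
    have c1 : Continuous fun τ => X τ t x := by
      have he : Continuous fun τ : ℝ => ((τ, t, x) : ℝ × ℝ × (Fin n → ℝ)) := by fun_prop
      exact hX.continuous.comp he
    have c2 : Continuous fun τ => B τ (X τ t x) := by
      have he : Continuous fun τ : ℝ => ((τ, X τ t x) : ℝ × (Fin n → ℝ)) := by fun_prop
      exact hBcont.comp he
    have e : (fun τ => divX n V τ (X τ t x))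
        = fun τ => ∑ i, (B τ (X τ t x)) (Pi.single i 1) i := by
      funext τ; simp only [divX]
      rfl
    rw [e]
    refine continuous_finset_sum _ fun i _ => ?_
    exact ((continuous_apply i).comp (c2.clm_apply continuous_const))
  -- solve the ODE: J = exp ∫ div
  have hEXP : ∀ t x s, Jdet n X s t x = Real.exp (∫ τ in t..s, divX n V τ (X τ t x)) := by
    intro t x s
    set g : ℝ → ℝ := fun σ => ∫ τ in t..σ, divX n V τ (X τ t x) with hg
    have hg' : ∀ σ, HasDerivAt g (divX n V σ (X σ t x)) σ := fun σ =>
      ((hdcont t x).integral_hasStrictDerivAt t σ).hasDerivAt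
    set h : ℝ → ℝ := fun σ => Jdet n X σ t x * Real.exp (-g σ) with hh
    have hh' : ∀ σ, HasDerivAt h 0 σ := by
      intro σ
      have h2 : HasDerivAt (fun σ => Real.exp (-g σ))
          (Real.exp (-g σ) * -divX n V σ (X σ t x)) σ := ((hg' σ).neg).exp
      have h3 : HasDerivAt h _ σ := (hDER t x σ).fun_mul h2
      convert h3 using 1
      ring
    have hconst : h s = h t :=
      is_const_of_deriv_eq_zero (fun σ => (hh' σ).differentiableAt)
        (fun σ => (hh' σ).deriv) s t
    have hht : h t = 1 := by
      rw [hh]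
      simp only [hg, intervalIntegral.integral_same, neg_zero, Real.exp_zero, mul_one]
      exact hJtt t x
    have hhs : Jdet n X s t x * Real.exp (-g s) = 1 := by rw [← hht]; exact hconst
    have := Real.exp_ne_zero (g s)
    rw [Real.exp_neg] at hhs
    field_simp at hhs
    exact hhs
  exact ⟨fun s t x => hDER t x s, fun s t x => hEXP t x s,
    fun s t x => by rw [hEXP t x s]; exact Real.exp_pos _, hJtt⟩
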